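/- Let A₁, A₂, B₁, B₂ be Hermitian involutions (squares equal to identity) and I the CHSH operator A₁⊗B₁ + A₁⊗B₂ + A₂⊗B₁ − A₂⊗B₂. Then the operator norm of I satisfies ‖I‖² ≤ 4 + ‖[A₁,A₂]‖·‖[B₁,B₂]‖. In particular ‖I‖ ≤ 2√2 (Tsirelson's bound). -/

import Mathlib

open Kronecker Matrix Finset

/-- The ℓ²-operator norm of a square complex matrix. -/
noncomputable def matOpNorm {n : Type*} [Fintype n] [DecidableEq n]
    (M : Matrix n n ℂ) : ℝ :=
  ‖Matrix.toEuclideanCLM (𝕜 := ℂ) M‖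

namespace ChshAux



variable {k l : Type*} [Fintype k] [DecidableEq k] [Fintype l] [DecidableEq l]

set_option linter.unusedSectionVars false

lemma matOpNorm_nonneg (M : Matrix k k ℂ) : 0 ≤ matOpNorm M := norm_nonneg _

lemma matOpNorm_mul_le (M N : Matrix k k ℂ) :
    matOpNorm (M * N) ≤ matOpNorm M * matOpNorm N := by
  unfold matOpNorm; rw [_root_.map_mul]; exact norm_mul_le _ _

lemma matOpNorm_one_le : matOpNorm (1 : Matrix k k ℂ) ≤ 1 := by
  unfold matOpNorm; rw [_root_.map_one]
  exact ContinuousLinearMap.norm_id_le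

lemma matOpNorm_add_le (M N : Matrix k k ℂ) :
    matOpNorm (M + N) ≤ matOpNorm M + matOpNorm N := by
  unfold matOpNorm; rw [_root_.map_add]; exact norm_add_le _ _

lemma matOpNorm_sub_le (M N : Matrix k k ℂ) :
    matOpNorm (M - N) ≤ matOpNorm M + matOpNorm N := by
  unfold matOpNorm; rw [_root_.map_sub]; exact norm_sub_le _ _

lemma matOpNorm_star_mul_self (M : Matrix k k ℂ) :
    matOpNorm (Mᴴ * M) = matOpNorm M * matOpNorm M := by
  unfold matOpNorm
  rw [_root_.map_mul, ← Matrix.star_eq_conjTranspose, map_star]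
  exact ContinuousLinearMap.norm_adjoint_comp_self _

lemma matOpNorm_le_one_of_involution {M : Matrix k k ℂ} (hM : M.IsHermitian)
    (hMsq : M * M = 1) : matOpNorm M ≤ 1 := by
  have h : matOpNorm M * matOpNorm M ≤ 1 := by
    rw [← matOpNorm_star_mul_self, hM.eq, hMsq]; exact matOpNorm_one_le
  nlinarith [matOpNorm_nonneg M]

lemma matOpNorm_sq_of_hermitian {M : Matrix k k ℂ} (hM : M.IsHermitian) :
    matOpNorm M ^ 2 = matOpNorm (M * M) := by
  rw [pow_two, ← matOpNorm_star_mul_self, hM.eq]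



lemma euclid_norm_sq {ι : Type*} [Fintype ι] (w : EuclideanSpace ℂ ι) :
    ‖w‖ ^ 2 = ∑ i, ‖w i‖ ^ 2 := by
  rw [EuclideanSpace.norm_eq, Real.sq_sqrt (by positivity)]

lemma clm_apply_eq_mulVec (M : Matrix k k ℂ) (w : EuclideanSpace ℂ k) (i : k) :
    (Matrix.toEuclideanCLM (𝕜 := ℂ) M w) i = M.mulVec w i := rfl

lemma opNorm_kron_one_le (X : Matrix k k ℂ) :
    matOpNorm (X ⊗ₖ (1 : Matrix l l ℂ)) ≤ matOpNorm X := by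
  unfold matOpNorm
  refine ContinuousLinearMap.opNorm_le_bound _ (norm_nonneg _) fun v => ?_
  set T := Matrix.toEuclideanCLM (𝕜 := ℂ) (X ⊗ₖ (1 : Matrix l l ℂ))
  set c := ‖Matrix.toEuclideanCLM (𝕜 := ℂ) X‖ with hc
  have hc0 : 0 ≤ c := norm_nonneg _
  -- the slices of v
  set vj : l → EuclideanSpace ℂ k := fun j => WithLp.toLp 2 (fun i => v (i, j)) with hvj
  have he : ∀ i j, (T v) (i, j) = (Matrix.toEuclideanCLM (𝕜 := ℂ) X (vj j)) i := by
    intro i j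
    rw [clm_apply_eq_mulVec]
    show ((X ⊗ₖ (1 : Matrix l l ℂ)).mulVec v) (i, j) = _
    simp only [Matrix.mulVec, dotProduct, Fintype.sum_prod_type,
      Matrix.kroneckerMap_apply, Matrix.one_apply, mul_ite, mul_one, mul_zero,
      ite_mul, zero_mul, Finset.sum_ite_eq, Finset.mem_univ, if_true]
    rfl
  have key : ‖T v‖ ^ 2 ≤ (c * ‖v‖) ^ 2 := by
    rw [euclid_norm_sq, mul_pow]
    calc ∑ p : k × l, ‖(T v) p‖ ^ 2
        = ∑ j : l, ∑ i : k, ‖(T v) (i, j)‖ ^ 2 := by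
          rw [Fintype.sum_prod_type, Finset.sum_comm]
      _ = ∑ j : l, ‖Matrix.toEuclideanCLM (𝕜 := ℂ) X (vj j)‖ ^ 2 := by
          refine Finset.sum_congr rfl fun j _ => ?_
          rw [euclid_norm_sq]
          exact Finset.sum_congr rfl fun i _ => by rw [he]
      _ ≤ ∑ j : l, c ^ 2 * ‖vj j‖ ^ 2 := by
          refine Finset.sum_le_sum fun j _ => ?_
          have h := (Matrix.toEuclideanCLM (𝕜 := ℂ) X).le_opNorm (vj j)
          calc ‖Matrix.toEuclideanCLM (𝕜 := ℂ) X (vj j)‖ ^ 2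
              ≤ (c * ‖vj j‖) ^ 2 := by
                have := norm_nonneg (Matrix.toEuclideanCLM (𝕜 := ℂ) X (vj j))
                nlinarith
            _ = c ^ 2 * ‖vj j‖ ^ 2 := by ring
      _ = c ^ 2 * ‖v‖ ^ 2 := by
          rw [← Finset.mul_sum, euclid_norm_sq, Fintype.sum_prod_type, Finset.sum_comm]
          congr 1
          exact Finset.sum_congr rfl fun j _ => euclid_norm_sq (vj j)
  have h1 := Real.sqrt_le_sqrt key
  rwa [Real.sqrt_sq (norm_nonneg _), Real.sqrt_sq (by positivity)] at h1

lemma opNorm_one_kron_le (Y : Matrix l l ℂ) :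
    matOpNorm ((1 : Matrix k k ℂ) ⊗ₖ Y) ≤ matOpNorm Y := by
  unfold matOpNorm
  refine ContinuousLinearMap.opNorm_le_bound _ (norm_nonneg _) fun v => ?_
  set T := Matrix.toEuclideanCLM (𝕜 := ℂ) ((1 : Matrix k k ℂ) ⊗ₖ Y)
  set c := ‖Matrix.toEuclideanCLM (𝕜 := ℂ) Y‖ with hc
  have hc0 : 0 ≤ c := norm_nonneg _
  set vi : k → EuclideanSpace ℂ l := fun i => WithLp.toLp 2 (fun j => v (i, j)) with hvi
  have he : ∀ i j, (T v) (i, j) = (Matrix.toEuclideanCLM (𝕜 := ℂ) Y (vi i)) j := by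
    intro i j
    rw [clm_apply_eq_mulVec]
    show (((1 : Matrix k k ℂ) ⊗ₖ Y).mulVec v) (i, j) = _
    simp only [Matrix.mulVec, dotProduct, Fintype.sum_prod_type,
      Matrix.kroneckerMap_apply, Matrix.one_apply, ite_mul, one_mul, zero_mul]
    rw [Finset.sum_comm]
    simp only [Finset.sum_ite_eq, Finset.mem_univ, if_true]
    rfl
  have key : ‖T v‖ ^ 2 ≤ (c * ‖v‖) ^ 2 := by
    rw [euclid_norm_sq, mul_pow]
    calc ∑ p : k × l, ‖(T v) p‖ ^ 2
        = ∑ i : k, ∑ j : l, ‖(T v) (i, j)‖ ^ 2 := by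
          rw [Fintype.sum_prod_type]
      _ = ∑ i : k, ‖Matrix.toEuclideanCLM (𝕜 := ℂ) Y (vi i)‖ ^ 2 := by
          refine Finset.sum_congr rfl fun i _ => ?_
          rw [euclid_norm_sq]
          exact Finset.sum_congr rfl fun j _ => by rw [he]
      _ ≤ ∑ i : k, c ^ 2 * ‖vi i‖ ^ 2 := by
          refine Finset.sum_le_sum fun i _ => ?_
          have h := (Matrix.toEuclideanCLM (𝕜 := ℂ) Y).le_opNorm (vi i)
          calc ‖Matrix.toEuclideanCLM (𝕜 := ℂ) Y (vi i)‖ ^ 2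
              ≤ (c * ‖vi i‖) ^ 2 := by
                have := norm_nonneg (Matrix.toEuclideanCLM (𝕜 := ℂ) Y (vi i))
                nlinarith
            _ = c ^ 2 * ‖vi i‖ ^ 2 := by ring
      _ = c ^ 2 * ‖v‖ ^ 2 := by
          rw [← Finset.mul_sum, euclid_norm_sq, Fintype.sum_prod_type]
          congr 1
          exact Finset.sum_congr rfl fun i _ => euclid_norm_sq (vi i)
  have h1 := Real.sqrt_le_sqrt key
  rwa [Real.sqrt_sq (norm_nonneg _), Real.sqrt_sq (by positivity)] at h1

lemma opNorm_kron_le (X : Matrix k k ℂ) (Y : Matrix l l ℂ) :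
    matOpNorm (X ⊗ₖ Y) ≤ matOpNorm X * matOpNorm Y := by
  have h : X ⊗ₖ Y = (X ⊗ₖ (1 : Matrix l l ℂ)) * ((1 : Matrix k k ℂ) ⊗ₖ Y) := by
    rw [← Matrix.mul_kronecker_mul, mul_one, one_mul]
  rw [h]
  calc matOpNorm ((X ⊗ₖ (1 : Matrix l l ℂ)) * ((1 : Matrix k k ℂ) ⊗ₖ Y))
      ≤ matOpNorm (X ⊗ₖ (1 : Matrix l l ℂ)) * matOpNorm ((1 : Matrix k k ℂ) ⊗ₖ Y) := by
        unfold matOpNorm; rw [_root_.map_mul]; exact norm_mul_le _ _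
    _ ≤ matOpNorm X * matOpNorm Y :=
        mul_le_mul (opNorm_kron_one_le X) (opNorm_one_kron_le Y) (norm_nonneg _) (norm_nonneg _)

set_option linter.unusedSectionVars false

lemma kron_conjT (X : Matrix k k ℂ) (Y : Matrix l l ℂ) :
    (X ⊗ₖ Y)ᴴ = Xᴴ ⊗ₖ Yᴴ := by
  ext ⟨i, j⟩ ⟨i', j'⟩
  simp [Matrix.conjTranspose_apply, Matrix.kroneckerMap_apply, star_mul', mul_comm]

lemma sub_kron (X X' : Matrix k k ℂ) (Y : Matrix l l ℂ) :
    (X - X') ⊗ₖ Y = X ⊗ₖ Y - X' ⊗ₖ Y := by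
  ext ⟨i, j⟩ ⟨i', j'⟩
  simp [Matrix.kroneckerMap_apply, sub_mul]

lemma kron_sub (X : Matrix k k ℂ) (Y Y' : Matrix l l ℂ) :
    X ⊗ₖ (Y - Y') = X ⊗ₖ Y - X ⊗ₖ Y' := by
  ext ⟨i, j⟩ ⟨i', j'⟩
  simp [Matrix.kroneckerMap_apply, mul_sub]


end ChshAux

open ChshAux

/-- Tsirelson-type bound: `‖I‖² ≤ 4 + ‖[A₁,A₂]‖·‖[B₁,B₂]‖`, and in particular
`‖I‖ ≤ 2√2`, for the CHSH operator built from Hermitian involutions. -/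
theorem chsh_norm_bound
    (m n : ℕ)
    (A₁ A₂ : Matrix (Fin m) (Fin m) ℂ) (B₁ B₂ : Matrix (Fin n) (Fin n) ℂ)
    (hA₁ : A₁.IsHermitian) (hA₂ : A₂.IsHermitian)
    (hB₁ : B₁.IsHermitian) (hB₂ : B₂.IsHermitian)
    (hA₁sq : A₁ * A₁ = 1) (hA₂sq : A₂ * A₂ = 1)
    (hB₁sq : B₁ * B₁ = 1) (hB₂sq : B₂ * B₂ = 1)
    (I : Matrix (Fin m × Fin n) (Fin m × Fin n) ℂ)
    (hI : I = A₁ ⊗ₖ B₁ + A₁ ⊗ₖ B₂ + A₂ ⊗ₖ B₁ - A₂ ⊗ₖ B₂) :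
    matOpNorm I ^ 2 ≤ 4 + matOpNorm (A₁ * A₂ - A₂ * A₁) * matOpNorm (B₁ * B₂ - B₂ * B₁)
      ∧ matOpNorm I ≤ 2 * Real.sqrt 2 := by
  have hIH : I.IsHermitian := by
    subst hI
    show _ = _
    simp only [Matrix.conjTranspose_add, Matrix.conjTranspose_sub, kron_conjT,
      hA₁.eq, hA₂.eq, hB₁.eq, hB₂.eq]
  have hIsq : I * I =
      ((1 : Matrix (Fin m) (Fin m) ℂ) ⊗ₖ (1 : Matrix (Fin n) (Fin n) ℂ)
        + 1 ⊗ₖ 1 + 1 ⊗ₖ 1 + 1 ⊗ₖ 1)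
      - (A₁ * A₂ - A₂ * A₁) ⊗ₖ (B₁ * B₂ - B₂ * B₁) := by
    subst hI
    simp only [sub_kron, kron_sub, Matrix.add_mul, Matrix.mul_add, Matrix.sub_mul,
      Matrix.mul_sub, ← Matrix.mul_kronecker_mul, hA₁sq, hA₂sq, hB₁sq, hB₂sq]
    abel
  have hA : matOpNorm (A₁ * A₂ - A₂ * A₁) ≤ 2 := by
    have h1 := matOpNorm_le_one_of_involution hA₁ hA₁sq
    have h2 := matOpNorm_le_one_of_involution hA₂ hA₂sq
    have h3 := matOpNorm_sub_le (A₁ * A₂) (A₂ * A₁)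
    have h4 := matOpNorm_mul_le A₁ A₂
    have h5 := matOpNorm_mul_le A₂ A₁
    nlinarith [matOpNorm_nonneg A₁, matOpNorm_nonneg A₂]
  have hB : matOpNorm (B₁ * B₂ - B₂ * B₁) ≤ 2 := by
    have h1 := matOpNorm_le_one_of_involution hB₁ hB₁sq
    have h2 := matOpNorm_le_one_of_involution hB₂ hB₂sq
    have h3 := matOpNorm_sub_le (B₁ * B₂) (B₂ * B₁)
    have h4 := matOpNorm_mul_le B₁ B₂
    have h5 := matOpNorm_mul_le B₂ B₁
    nlinarith [matOpNorm_nonneg B₁, matOpNorm_nonneg B₂]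
  have hfour : matOpNorm ((1 : Matrix (Fin m) (Fin m) ℂ) ⊗ₖ (1 : Matrix (Fin n) (Fin n) ℂ)
      + 1 ⊗ₖ 1 + 1 ⊗ₖ 1 + 1 ⊗ₖ 1) ≤ 4 := by
    rw [Matrix.one_kronecker_one]
    have h0 := matOpNorm_one_le (k := Fin m × Fin n)
    have t1 := matOpNorm_add_le ((1 : Matrix (Fin m × Fin n) (Fin m × Fin n) ℂ) + 1 + 1) 1
    have t2 := matOpNorm_add_le ((1 : Matrix (Fin m × Fin n) (Fin m × Fin n) ℂ) + 1) 1
    have t3 := matOpNorm_add_le (1 : Matrix (Fin m × Fin n) (Fin m × Fin n) ℂ) 1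
    linarith
  have main1 : matOpNorm I ^ 2
      ≤ 4 + matOpNorm (A₁ * A₂ - A₂ * A₁) * matOpNorm (B₁ * B₂ - B₂ * B₁) := by
    rw [matOpNorm_sq_of_hermitian hIH, hIsq]
    calc matOpNorm _ ≤ _ + _ := matOpNorm_sub_le _ _
      _ ≤ 4 + matOpNorm (A₁ * A₂ - A₂ * A₁) * matOpNorm (B₁ * B₂ - B₂ * B₁) :=
        add_le_add hfour (opNorm_kron_le _ _)
  refine ⟨main1, ?_⟩
  have ha0 := matOpNorm_nonneg I
  have hA0 := matOpNorm_nonneg (A₁ * A₂ - A₂ * A₁)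
  have hB0 := matOpNorm_nonneg (B₁ * B₂ - B₂ * B₁)
  have h8 : matOpNorm I ^ 2 ≤ 8 := by nlinarith
  have hs : Real.sqrt 2 ^ 2 = 2 := Real.sq_sqrt (by norm_num)
  nlinarith [Real.sqrt_nonneg 2, sq_nonneg (matOpNorm I - 2 * Real.sqrt 2)]
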